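/- arXiv:2507.09405 — 2 statements merged into one kernel-verified Lean document; each statement's English description precedes it below -/
import Mathlib

section
/- (Corollary.) Let m ≥ 1 and let u_1, …, u_m be formal power series in one variable x over ℚ, each with zero constant coefficient, such that u_1 + ⋯ + u_m = 0. Let σ be the substitution sending t_n to u_n for 1 ≤ n ≤ m and to 0 for n > m (this substitution of G and H is well defined since each u_n has zero constant coefficient and all but finitely many are 0). Then (subst σ G)·(1 − Σ_{n=1}^m n·u_n) = 1, and subst σ H = subst σ G. -/
/- `R = MvPowerSeries ℕ ℚ` and `ℚ⟦x⟧ = PowerSeries ℚ`, each with the product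
(coefficientwise) topology. -/
noncomputable instance : TopologicalSpace (MvPowerSeries ℕ ℚ) :=
  inferInstanceAs (TopologicalSpace ((ℕ →₀ ℕ) → ℚ))

noncomputable instance : TopologicalSpace (PowerSeries ℚ) :=
  inferInstanceAs (TopologicalSpace ((Unit →₀ ℕ) → ℚ))

open MvPowerSeries in
/-- Substitution of the one-variable power series `σ n` for the variable `t_n` (for each
`n : ℕ`) in a multivariate power series `F`: the sum over all monomials `m` of the
coefficient of `m` in `F` times `∏_i (σ i) ^ (m i)`. -/
noncomputable def substGeode (σ : ℕ → PowerSeries ℚ) (F : MvPowerSeries ℕ ℚ) :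
    PowerSeries ℚ :=
  ∑' m : ℕ →₀ ℕ, (coeff m F) • ∏ i ∈ m.support, (σ i) ^ (m i)

open MvPowerSeries

namespace GeodeAux

open MvPowerSeries Finset

instance : T2Space (MvPowerSeries ℕ ℚ) := inferInstanceAs (T2Space ((ℕ →₀ ℕ) → ℚ))
instance : T2Space (PowerSeries ℚ) := inferInstanceAs (T2Space ((Unit →₀ ℕ) → ℚ))
instance : IsTopologicalAddGroup (MvPowerSeries ℕ ℚ) :=
  inferInstanceAs (IsTopologicalAddGroup ((ℕ →₀ ℕ) → ℚ))
instance : IsTopologicalAddGroup (PowerSeries ℚ) :=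
  inferInstanceAs (IsTopologicalAddGroup ((Unit →₀ ℕ) → ℚ))

instance contMul : ContinuousMul (MvPowerSeries ℕ ℚ) := by
  constructor
  have : Continuous fun p : MvPowerSeries ℕ ℚ × MvPowerSeries ℕ ℚ =>
      (p.1 * p.2 : (ℕ →₀ ℕ) → ℚ) := by
    apply continuous_pi
    intro d
    have h : (fun p : MvPowerSeries ℕ ℚ × MvPowerSeries ℕ ℚ => (p.1 * p.2) d)
        = fun p => ∑ x ∈ Finset.HasAntidiagonal.antidiagonal d, p.1 x.1 * p.2 x.2 := by
      funext p; exact coeff_mul d p.1 p.2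
    rw [h]
    exact continuous_finset_sum _ fun x _ =>
      ((continuous_apply x.1).comp continuous_fst).mul
        ((continuous_apply x.2).comp continuous_snd)
  exact this

instance : IsTopologicalSemiring (MvPowerSeries ℕ ℚ) := {}

lemma coeff_X_mul_eq_zero {k : ℕ} (g : MvPowerSeries ℕ ℚ) {d : ℕ →₀ ℕ} (h : d k = 0) :
    coeff d (X k * g) = 0 := by
  classical
  rw [coeff_mul]
  refine Finset.sum_eq_zero fun x hx => ?_
  rw [Finset.HasAntidiagonal.mem_antidiagonal] at hx
  rw [coeff_X]
  split_ifs with h1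
  · exfalso
    have : (x.1 + x.2) k = d k := by rw [hx]
    rw [Finsupp.add_apply, h1, Finsupp.single_eq_same, h] at this
    omega
  · rw [zero_mul]

/-- Families whose `n`-th term only involves monomials containing `t_{n+1}`. -/
def XFam (f : ℕ → MvPowerSeries ℕ ℚ) : Prop :=
  ∀ (d : ℕ →₀ ℕ) (n : ℕ), coeff d (f n) ≠ 0 → d (n + 1) ≠ 0

lemma XFam.X_mul (g : ℕ → MvPowerSeries ℕ ℚ) : XFam (fun n => X (n + 1) * g n) :=
  fun d n h => fun hd => h (coeff_X_mul_eq_zero _ hd)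

lemma XFam.X : XFam (fun n => (X (n + 1) : MvPowerSeries ℕ ℚ)) := by
  have := XFam.X_mul (fun _ => (1 : MvPowerSeries ℕ ℚ))
  simpa using this

lemma XFam.support {f : ℕ → MvPowerSeries ℕ ℚ} (hf : XFam f) (d : ℕ →₀ ℕ) :
    ∀ n ∉ d.support.image Nat.pred, coeff d (f n) = 0 := by
  intro n hn
  by_contra h
  apply hn
  have h1 : (n + 1) ∈ d.support := Finsupp.mem_support_iff.mpr (hf d n h)
  exact Finset.mem_image.mpr ⟨n + 1, h1, rfl⟩

lemma XFam.summable {f : ℕ → MvPowerSeries ℕ ℚ} (hf : XFam f) : Summable f :=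
  Pi.summable.mpr fun d => summable_of_ne_finset_zero (hf.support d)

lemma XFam.coeff_tsum {f : ℕ → MvPowerSeries ℕ ℚ} (hf : XFam f) (d : ℕ →₀ ℕ) :
    coeff d (∑' n, f n) = ∑ n ∈ d.support.image Nat.pred, coeff d (f n) := by
  have h1 : coeff d (∑' n, f n) = ∑' n, coeff d (f n) := tsum_apply hf.summable
  rw [h1, tsum_eq_sum (hf.support d)]

lemma S1_ne_zero : (∑' n : ℕ, (X (n + 1) : MvPowerSeries ℕ ℚ)) ≠ 0 := by
  intro h
  have h1 := XFam.X.coeff_tsum (Finsupp.single 1 1)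
  rw [h] at h1
  rw [Finsupp.support_single_ne_zero 1 one_ne_zero] at h1
  simp only [Finset.image_singleton, Nat.pred, Finset.sum_singleton] at h1
  norm_num at h1

/-- The key Geode identity `G = 1 + G * T`. -/
lemma geode_key (S G : MvPowerSeries ℕ ℚ)
    (hS : S = 1 + ∑' n : ℕ, (X (n + 1) : MvPowerSeries ℕ ℚ) * S ^ (n + 1))
    (hG : S - 1 = G * ∑' n : ℕ, (X (n + 1) : MvPowerSeries ℕ ℚ)) :
    G = 1 + G * ∑' n : ℕ, (X (n + 1) : MvPowerSeries ℕ ℚ) *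
      ∑ j ∈ Finset.range (n + 1), S ^ j := by
  classical
  set S1 : MvPowerSeries ℕ ℚ := ∑' n : ℕ, (X (n + 1) : MvPowerSeries ℕ ℚ) with hS1def
  set T : MvPowerSeries ℕ ℚ :=
    ∑' n : ℕ, (X (n + 1) : MvPowerSeries ℕ ℚ) * ∑ j ∈ Finset.range (n + 1), S ^ j with hTdef
  have key : (∑' n : ℕ, (X (n + 1) : MvPowerSeries ℕ ℚ) * S ^ (n + 1)) = S1 + (S - 1) * T := by
    have e1 : ∀ n : ℕ, (X (n + 1) : MvPowerSeries ℕ ℚ) * S ^ (n + 1)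
        = X (n + 1) + X (n + 1) * ((S - 1) * ∑ j ∈ Finset.range (n + 1), S ^ j) := by
      intro n
      have hgeo : S ^ (n + 1) = 1 + (S - 1) * ∑ j ∈ Finset.range (n + 1), S ^ j := by
        linear_combination -geom_sum_mul S (n + 1)
      rw [hgeo]; ring
    rw [tsum_congr e1,
      Summable.tsum_add XFam.X.summable (XFam.X_mul fun n => (S - 1) * ∑ j ∈ Finset.range (n + 1), S ^ j).summable]
    congr 1
    have e2 : ∀ n : ℕ, (X (n + 1) : MvPowerSeries ℕ ℚ) *
        ((S - 1) * ∑ j ∈ Finset.range (n + 1), S ^ j)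
        = (S - 1) * ((X (n + 1) : MvPowerSeries ℕ ℚ) * ∑ j ∈ Finset.range (n + 1), S ^ j) := by
      intro n; ring
    rw [tsum_congr e2,
      (XFam.X_mul fun n => ∑ j ∈ Finset.range (n + 1), S ^ j).summable.tsum_mul_left]
  have h2 : S - 1 = ∑' n : ℕ, (X (n + 1) : MvPowerSeries ℕ ℚ) * S ^ (n + 1) := by
    conv_lhs => rw [hS]
    exact add_sub_cancel_left 1 _
  have eqA : G * S1 = S1 + G * S1 * T := by
    calc G * S1 = S - 1 := hG.symm
      _ = ∑' n : ℕ, (X (n + 1) : MvPowerSeries ℕ ℚ) * S ^ (n + 1) := h2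
      _ = S1 + (S - 1) * T := key
      _ = S1 + G * S1 * T := by rw [hG]
  have h0 : S1 * (G - (1 + G * T)) = 0 := by linear_combination eqA
  rcases mul_eq_zero.mp h0 with h | h
  · exact absurd h S1_ne_zero
  · linear_combination h


open MvPowerSeries Finset

instance inst_s7 : T2Space (PowerSeries ℚ) := inferInstanceAs (T2Space ((Unit →₀ ℕ) → ℚ))
instance inst_s7_2 : IsTopologicalAddGroup (PowerSeries ℚ) :=
  inferInstanceAs (IsTopologicalAddGroup ((Unit →₀ ℕ) → ℚ))

/-- The product `∏ σ_i ^ d_i`. -/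
noncomputable def P (σ : ℕ → PowerSeries ℚ) (d : ℕ →₀ ℕ) : PowerSeries ℚ :=
  ∏ i ∈ d.support, σ i ^ d i

/-- Bound exponent vector. -/
noncomputable def D (m k : ℕ) : ℕ →₀ ℕ := ∑ i ∈ Finset.Icc 1 m, Finsupp.single i k

lemma substGeode_eq (σ : ℕ → PowerSeries ℚ) (F : MvPowerSeries ℕ ℚ) :
    substGeode σ F = ∑' d : ℕ →₀ ℕ, (coeff d F) • P σ d := rfl

lemma D_apply (m k i : ℕ) : D m k i = if i ∈ Finset.Icc 1 m then k else 0 := by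
  classical
  rw [D, Finsupp.finset_sum_apply]
  rw [Finset.sum_congr rfl fun j _ => Finsupp.single_apply]
  exact Finset.sum_ite_eq' _ _ _

lemma D_mono {m k k' : ℕ} (h : k ≤ k') : D m k ≤ D m k' := by
  intro i
  rw [D_apply, D_apply]
  split_ifs <;> omega

lemma support_subset_Icc {m k : ℕ} {d : ℕ →₀ ℕ} (h : d ≤ D m k) :
    d.support ⊆ Finset.Icc 1 m := by
  intro i hi
  by_contra hic
  have h1 := h i
  rw [D_apply, if_neg hic] at h1
  exact Finsupp.mem_support_iff.mp hi (Nat.le_zero.mp h1)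

lemma P_zero_of {m : ℕ} {σ : ℕ → PowerSeries ℚ}
    (hσout : ∀ n, n ∉ Finset.Icc 1 m → σ n = 0) {d : ℕ →₀ ℕ} {i : ℕ}
    (hi : i ∈ d.support) (hic : i ∉ Finset.Icc 1 m) : P σ d = 0 := by
  refine Finset.prod_eq_zero hi ?_
  rw [hσout i hic]
  exact zero_pow (Finsupp.mem_support_iff.mp hi)

lemma P_vanish {m : ℕ} {σ : ℕ → PowerSeries ℚ}
    (hσ0 : ∀ n, PowerSeries.constantCoeff (σ n) = 0)
    (hσout : ∀ n, n ∉ Finset.Icc 1 m → σ n = 0)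
    {k : ℕ} {d : ℕ →₀ ℕ} (h : ¬ d ≤ D m k) :
    PowerSeries.coeff k (P σ d) = 0 := by
  classical
  by_cases hsupp : ∀ i ∈ d.support, i ∈ Finset.Icc 1 m
  · have : ∃ i ∈ d.support, ¬ d i ≤ D m k i := by
      by_contra hc
      push_neg at hc
      exact h ((Finsupp.le_iff d (D m k)).mpr hc)
    obtain ⟨i, hi, hik⟩ := this
    rw [D_apply, if_pos (hsupp i hi)] at hik
    have hdvd : (PowerSeries.X : PowerSeries ℚ) ^ d i ∣ P σ d :=
      dvd_trans (pow_dvd_pow_of_dvd (PowerSeries.X_dvd_iff.mpr (hσ0 i)) _)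
        (Finset.dvd_prod_of_mem _ hi)
    exact PowerSeries.X_pow_dvd_iff.mp hdvd k (by omega)
  · push_neg at hsupp
    obtain ⟨i, hi, hic⟩ := hsupp
    rw [P_zero_of hσout hi hic, map_zero]

lemma P_mul (σ : ℕ → PowerSeries ℚ) (a b : ℕ →₀ ℕ) :
    P σ (a + b) = P σ a * P σ b := by
  classical
  have ha : ∀ c : ℕ →₀ ℕ, P σ c = c.prod fun i e => σ i ^ e := fun c => rfl
  rw [ha, ha, ha]
  exact Finsupp.prod_add_index (fun i _ => pow_zero (σ i)) (fun i _ e1 e2 => pow_add (σ i) e1 e2)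

lemma coeff_P_smul (c : ℚ) (f : PowerSeries ℚ) (k : ℕ) :
    PowerSeries.coeff k (c • f) = c * PowerSeries.coeff k f := by
  rw [map_smul, smul_eq_mul]

lemma substSummable (m : ℕ) (σ : ℕ → PowerSeries ℚ)
    (hσ0 : ∀ n, PowerSeries.constantCoeff (σ n) = 0)
    (hσout : ∀ n, n ∉ Finset.Icc 1 m → σ n = 0) (F : MvPowerSeries ℕ ℚ) :
    Summable (fun d : ℕ →₀ ℕ => (coeff d F) • P σ d) := by
  apply Pi.summable.mpr
  intro e
  apply summable_of_ne_finset_zero (s := Finset.Iic (D m (e ())))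
  intro d hd
  have h1 : ((coeff d F) • P σ d) e
      = PowerSeries.coeff (e ()) ((coeff d F) • P σ d) := by
    exact congrArg ((coeff d F) • P σ d) (Finsupp.unique_single e)
  rw [h1, coeff_P_smul, P_vanish hσ0 hσout (fun hc => hd (Finset.mem_Iic.mpr hc)), mul_zero]

/-- Master coefficient lemma. -/
lemma coeff_substGeode (m : ℕ) (σ : ℕ → PowerSeries ℚ)
    (hσ0 : ∀ n, PowerSeries.constantCoeff (σ n) = 0)
    (hσout : ∀ n, n ∉ Finset.Icc 1 m → σ n = 0) (F : MvPowerSeries ℕ ℚ) (k : ℕ) :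
    PowerSeries.coeff k (substGeode σ F)
      = ∑ d ∈ Finset.Iic (D m k), coeff d F * PowerSeries.coeff k (P σ d) := by
  have h1 : PowerSeries.coeff k (substGeode σ F)
      = ∑' d : ℕ →₀ ℕ, PowerSeries.coeff k ((coeff d F) • P σ d) :=
    tsum_apply (substSummable m σ hσ0 hσout F)
  rw [h1, tsum_eq_sum (s := Finset.Iic (D m k)) ?_]
  · exact Finset.sum_congr rfl fun d _ => coeff_P_smul _ _ k
  · intro d hd
    rw [coeff_P_smul, P_vanish hσ0 hσout (fun hc => hd (Finset.mem_Iic.mpr hc)), mul_zero]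



open MvPowerSeries Finset

variable {m : ℕ} {σ : ℕ → PowerSeries ℚ}

lemma substGeode_zero : substGeode σ 0 = 0 := by
  rw [substGeode_eq]
  have : (fun d : ℕ →₀ ℕ => (coeff d (0 : MvPowerSeries ℕ ℚ)) • P σ d) = fun _ => 0 := by
    funext d; rw [map_zero, zero_smul]
  rw [this, tsum_zero]

lemma substGeode_one : substGeode σ 1 = 1 := by
  classical
  rw [substGeode_eq]
  rw [tsum_eq_single (0 : ℕ →₀ ℕ) ?_]
  · rw [coeff_one, if_pos rfl, one_smul, P, Finsupp.support_zero, Finset.prod_empty]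
  · intro d hd
    rw [coeff_one, if_neg hd, zero_smul]

lemma substGeode_add (F F' : MvPowerSeries ℕ ℚ)
    (hσ0 : ∀ n, PowerSeries.constantCoeff (σ n) = 0)
    (hσout : ∀ n, n ∉ Finset.Icc 1 m → σ n = 0) :
    substGeode σ (F + F') = substGeode σ F + substGeode σ F' := by
  rw [substGeode_eq, substGeode_eq, substGeode_eq]
  have : (fun d : ℕ →₀ ℕ => (coeff d (F + F')) • P σ d)
      = fun d => (coeff d F) • P σ d + (coeff d F') • P σ d := by
    funext d; rw [map_add, add_smul]
  rw [this]
  exact Summable.tsum_add (substSummable m σ hσ0 hσout F) (substSummable m σ hσ0 hσout F')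

lemma substGeode_neg (F : MvPowerSeries ℕ ℚ) : substGeode σ (-F) = -substGeode σ F := by
  rw [substGeode_eq, substGeode_eq]
  have : (fun d : ℕ →₀ ℕ => (coeff d (-F)) • P σ d)
      = fun d => -((coeff d F) • P σ d) := by
    funext d; rw [map_neg, neg_smul]
  rw [this, tsum_neg]

lemma substGeode_X (j : ℕ) : substGeode σ (X j) = σ j := by
  classical
  rw [substGeode_eq]
  rw [tsum_eq_single (Finsupp.single j 1) ?_]
  · rw [coeff_X, if_pos rfl, one_smul, P, Finsupp.support_single_ne_zero j one_ne_zero,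
      Finset.prod_singleton, Finsupp.single_eq_same, pow_one]
  · intro d hd
    rw [coeff_X, if_neg hd, zero_smul]

lemma substGeode_mul (hσ0 : ∀ n, PowerSeries.constantCoeff (σ n) = 0)
    (hσout : ∀ n, n ∉ Finset.Icc 1 m → σ n = 0) (F F' : MvPowerSeries ℕ ℚ) :
    substGeode σ (F * F') = substGeode σ F * substGeode σ F' := by
  classical
  apply PowerSeries.ext
  intro k
  rw [coeff_substGeode m σ hσ0 hσout, PowerSeries.coeff_mul]
  -- extended MCL
  have hext : ∀ (F₀ : MvPowerSeries ℕ ℚ) (k₀ : ℕ), k₀ ≤ k →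
      PowerSeries.coeff k₀ (substGeode σ F₀)
        = ∑ d ∈ Finset.Iic (D m k), coeff d F₀ * PowerSeries.coeff k₀ (P σ d) := by
    intro F₀ k₀ hk₀
    rw [coeff_substGeode m σ hσ0 hσout]
    apply Finset.sum_subset (Finset.Iic_subset_Iic.mpr (D_mono hk₀))
    intro d _ hnd
    rw [P_vanish hσ0 hσout (fun hc => hnd (Finset.mem_Iic.mpr hc)), mul_zero]
  -- middle form
  have stepR : ∑ x ∈ Finset.HasAntidiagonal.antidiagonal k,
        PowerSeries.coeff x.1 (substGeode σ F) * PowerSeries.coeff x.2 (substGeode σ F')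
      = ∑ y ∈ Finset.Iic (D m k) ×ˢ Finset.Iic (D m k),
          coeff y.1 F * coeff y.2 F' * PowerSeries.coeff k (P σ y.1 * P σ y.2) := by
    have e1 : ∀ x ∈ Finset.HasAntidiagonal.antidiagonal k,
        PowerSeries.coeff x.1 (substGeode σ F) * PowerSeries.coeff x.2 (substGeode σ F')
        = ∑ y ∈ Finset.Iic (D m k) ×ˢ Finset.Iic (D m k),
            coeff y.1 F * coeff y.2 F'
              * (PowerSeries.coeff x.1 (P σ y.1) * PowerSeries.coeff x.2 (P σ y.2)) := by
      intro x hx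
      rw [Finset.HasAntidiagonal.mem_antidiagonal] at hx
      rw [hext F x.1 (by omega), hext F' x.2 (by omega), Finset.sum_mul_sum,
        Finset.sum_product]
      refine Finset.sum_congr rfl fun d1 _ => Finset.sum_congr rfl fun d2 _ => by ring
    rw [Finset.sum_congr rfl e1, Finset.sum_comm]
    refine Finset.sum_congr rfl fun y _ => ?_
    rw [← Finset.mul_sum, PowerSeries.coeff_mul]
  rw [stepR]
  -- step L
  have e2 : ∀ d ∈ Finset.Iic (D m k),
      coeff d (F * F') * PowerSeries.coeff k (P σ d)
      = ∑ x ∈ Finset.HasAntidiagonal.antidiagonal d,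
          coeff x.1 F * coeff x.2 F' * PowerSeries.coeff k (P σ d) := by
    intro d _
    rw [coeff_mul, Finset.sum_mul]
  rw [Finset.sum_congr rfl e2, Finset.sum_sigma']
  refine Finset.sum_bij_ne_zero (fun x _ _ => (x.2.1, x.2.2)) ?_ ?_ ?_ ?_
  · intro x hx hne
    rw [Finset.mem_sigma] at hx
    obtain ⟨hx1, hx2⟩ := hx
    rw [Finset.HasAntidiagonal.mem_antidiagonal] at hx2
    rw [Finset.mem_Iic] at hx1
    rw [Finset.mem_product, Finset.mem_Iic, Finset.mem_Iic]
    constructor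
    · exact le_trans (le_trans (self_le_add_right _ _) (le_of_eq hx2)) hx1
    · exact le_trans (le_trans (self_le_add_left _ _) (le_of_eq hx2)) hx1
  · intro a ha hane b hb hbne hab
    rw [Finset.mem_sigma, Finset.HasAntidiagonal.mem_antidiagonal] at ha hb
    have h1 : a.2 = b.2 := by
      rw [Prod.ext_iff] at hab
      exact Prod.ext hab.1 hab.2
    refine Sigma.ext ?_ (heq_of_eq h1)
    rw [← ha.2, ← hb.2, h1]
  · intro y hy hyne
    rw [Finset.mem_product] at hy
    have hsum : y.1 + y.2 ≤ D m k := by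
      by_contra hc
      apply hyne
      rw [← P_mul, P_vanish hσ0 hσout hc, mul_zero]
    refine ⟨⟨y.1 + y.2, y⟩, ?_, ?_, rfl⟩
    · rw [Finset.mem_sigma]
      exact ⟨Finset.mem_Iic.mpr hsum, Finset.HasAntidiagonal.mem_antidiagonal.mpr rfl⟩
    · intro hc
      apply hyne
      rw [← P_mul]
      exact hc
  · intro x hx hxne
    rw [Finset.mem_sigma, Finset.HasAntidiagonal.mem_antidiagonal] at hx
    rw [← hx.2, P_mul]

lemma substGeode_pow (hσ0 : ∀ n, PowerSeries.constantCoeff (σ n) = 0)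
    (hσout : ∀ n, n ∉ Finset.Icc 1 m → σ n = 0) (F : MvPowerSeries ℕ ℚ) (j : ℕ) :
    substGeode σ (F ^ j) = substGeode σ F ^ j := by
  induction j with
  | zero => rw [pow_zero, pow_zero]; exact substGeode_one
  | succ j ih => rw [pow_succ, pow_succ, substGeode_mul hσ0 hσout, ih]

lemma substGeode_sum (hσ0 : ∀ n, PowerSeries.constantCoeff (σ n) = 0)
    (hσout : ∀ n, n ∉ Finset.Icc 1 m → σ n = 0) {ι : Type*} (s : Finset ι)
    (f : ι → MvPowerSeries ℕ ℚ) :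
    substGeode σ (∑ i ∈ s, f i) = ∑ i ∈ s, substGeode σ (f i) := by
  classical
  induction s using Finset.induction_on with
  | empty => rw [Finset.sum_empty, Finset.sum_empty]; exact substGeode_zero
  | insert _ _ hni ih =>
    rw [Finset.sum_insert hni, Finset.sum_insert hni, substGeode_add _ _ hσ0 hσout, ih]

end GeodeAux

namespace GeodeAux

open MvPowerSeries Finset

variable {m : ℕ} {σ : ℕ → PowerSeries ℚ}

lemma sum_Icc_one (f : ℕ → PowerSeries ℚ) (m : ℕ) :
    ∑ n ∈ Finset.Icc 1 m, f n = ∑ n ∈ Finset.range m, f (n + 1) := by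
  rw [← Finset.Ico_add_one_right_eq_Icc, Finset.sum_Ico_eq_sum_range, Nat.add_sub_cancel]
  exact Finset.sum_congr rfl fun i _ => by rw [Nat.add_comm]

lemma substGeode_of_xfam_large (hσout : ∀ n, n ∉ Finset.Icc 1 m → σ n = 0)
    {f : ℕ → MvPowerSeries ℕ ℚ} (hf : XFam f) {n : ℕ} (hn : m ≤ n) :
    substGeode σ (f n) = 0 := by
  rw [substGeode_eq]
  have h : (fun d : ℕ →₀ ℕ => (coeff d (f n)) • P σ d) = fun _ => 0 := by
    funext d
    by_cases hc : coeff d (f n) = 0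
    · rw [hc, zero_smul]
    · rw [P_zero_of hσout (Finsupp.mem_support_iff.mpr (hf d n hc))
        (by rw [Finset.mem_Icc]; omega), smul_zero]
  rw [h, tsum_zero]

lemma substGeode_tsum (hσ0 : ∀ n, PowerSeries.constantCoeff (σ n) = 0)
    (hσout : ∀ n, n ∉ Finset.Icc 1 m → σ n = 0)
    {f : ℕ → MvPowerSeries ℕ ℚ} (hf : XFam f) :
    substGeode σ (∑' n, f n) = ∑ n ∈ Finset.range m, substGeode σ (f n) := by
  apply PowerSeries.ext
  intro k
  rw [coeff_substGeode m σ hσ0 hσout, map_sum]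
  have hsub : ∀ d ∈ Finset.Iic (D m k), d.support.image Nat.pred ⊆ Finset.range m := by
    intro d hd n hn
    obtain ⟨j, hj, rfl⟩ := Finset.mem_image.mp hn
    have hj2 := Finset.mem_Icc.mp (support_subset_Icc (Finset.mem_Iic.mp hd) hj)
    rw [Finset.mem_range, Nat.pred_eq_sub_one]
    omega
  have e1 : ∀ d ∈ Finset.Iic (D m k),
      coeff d (∑' n, f n) * PowerSeries.coeff k (P σ d)
      = ∑ n ∈ Finset.range m, coeff d (f n) * PowerSeries.coeff k (P σ d) := by
    intro d hd
    rw [hf.coeff_tsum d,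
      Finset.sum_subset (hsub d hd) (fun x _ hx => hf.support d x hx), Finset.sum_mul]
  rw [Finset.sum_congr rfl e1, Finset.sum_comm]
  exact Finset.sum_congr rfl fun n _ => (coeff_substGeode m σ hσ0 hσout (f n) k).symm

end GeodeAux

open GeodeAux

/-- (Corollary.) Let `m ≥ 1` and let `u 1, …, u m` be one-variable power series over `ℚ`
with zero constant coefficient and `u 1 + ⋯ + u m = 0`. Let `σ` send `t_n` to `u n` for
`1 ≤ n ≤ m` and to `0` for other `n`. Then `(subst σ G) · (1 − ∑_{n=1}^m n·u n) = 1` and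
`subst σ H = subst σ G`. -/
theorem geode_stmt7 (m : ℕ) (hm : 1 ≤ m) (u : ℕ → PowerSeries ℚ)
    (hu0 : ∀ n, 1 ≤ n → n ≤ m → PowerSeries.constantCoeff (u n) = 0)
    (husum : ∑ n ∈ Finset.Icc 1 m, u n = 0)
    (S G H : MvPowerSeries ℕ ℚ)
    (hS : S = 1 + ∑' n : ℕ, (X (n + 1) : MvPowerSeries ℕ ℚ) * S ^ (n + 1))
    (hG : S - 1 = G * ∑' n : ℕ, (X (n + 1) : MvPowerSeries ℕ ℚ))
    (hH : G = S * H) :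
    (substGeode (fun n => if 1 ≤ n ∧ n ≤ m then u n else 0) G) *
        (1 - ∑ n ∈ Finset.Icc 1 m, (n : PowerSeries ℚ) * u n) = 1 ∧
      substGeode (fun n => if 1 ≤ n ∧ n ≤ m then u n else 0) H =
        substGeode (fun n => if 1 ≤ n ∧ n ≤ m then u n else 0) G := by
  classical
  set σ : ℕ → PowerSeries ℚ := fun n => if 1 ≤ n ∧ n ≤ m then u n else 0 with hσdef
  have hσ0 : ∀ n, PowerSeries.constantCoeff (σ n) = 0 := by
    intro n
    by_cases h : 1 ≤ n ∧ n ≤ m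
    · rw [hσdef]; simp only [if_pos h]; exact hu0 n h.1 h.2
    · rw [hσdef]; simp only [if_neg h, map_zero]
  have hσout : ∀ n, n ∉ Finset.Icc 1 m → σ n = 0 := by
    intro n hn
    rw [Finset.mem_Icc] at hn
    rw [hσdef]
    exact if_neg (by omega)
  -- substGeode of S1 is 0
  have hσ_icc : ∀ n ∈ Finset.range m, σ (n + 1) = u (n + 1) := by
    intro n hn
    rw [Finset.mem_range] at hn
    rw [hσdef]
    exact if_pos ⟨by omega, by omega⟩
  have husum' : ∑ n ∈ Finset.range m, u (n + 1) = 0 := by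
    rw [sum_Icc_one u m] at husum
    exact husum
  have hφS1 : substGeode σ (∑' n : ℕ, (X (n + 1) : MvPowerSeries ℕ ℚ)) = 0 := by
    rw [substGeode_tsum hσ0 hσout XFam.X]
    rw [Finset.sum_congr rfl fun n _ => substGeode_X (σ := σ) (n + 1)]
    rw [Finset.sum_congr rfl hσ_icc]
    exact husum'
  -- substGeode of S is 1
  have hφsub : ∀ F : MvPowerSeries ℕ ℚ, substGeode σ (F - 1) = substGeode σ F - 1 := by
    intro F
    rw [sub_eq_add_neg, substGeode_add _ _ hσ0 hσout, substGeode_neg, substGeode_one,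
      ← sub_eq_add_neg]
  have hφS : substGeode σ S = 1 := by
    have h1 := congrArg (substGeode σ) hG
    rw [hφsub, substGeode_mul hσ0 hσout, hφS1, mul_zero, sub_eq_zero] at h1
    exact h1
  -- key identity
  have hGT := geode_key S G hS hG
  have hφQ : ∀ n : ℕ, substGeode σ (∑ j ∈ Finset.range (n + 1), S ^ j)
      = ((n : PowerSeries ℚ) + 1) := by
    intro n
    rw [substGeode_sum hσ0 hσout]
    rw [Finset.sum_congr rfl fun j _ => substGeode_pow hσ0 hσout S j]
    rw [Finset.sum_congr rfl fun j _ => by rw [hφS, one_pow]]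
    rw [Finset.sum_const, Finset.card_range, nsmul_eq_mul, mul_one]
    push_cast
    ring
  have hφT : substGeode σ (∑' n : ℕ, (X (n + 1) : MvPowerSeries ℕ ℚ) *
      ∑ j ∈ Finset.range (n + 1), S ^ j)
      = ∑ n ∈ Finset.Icc 1 m, (n : PowerSeries ℚ) * u n := by
    rw [substGeode_tsum hσ0 hσout (XFam.X_mul _)]
    rw [Finset.sum_congr rfl fun n _ => substGeode_mul hσ0 hσout _ _]
    rw [Finset.sum_congr rfl fun n hn => by
      rw [substGeode_X (σ := σ) (n + 1), hφQ n, hσ_icc n hn]]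
    rw [sum_Icc_one (fun n => (n : PowerSeries ℚ) * u n) m]
    refine Finset.sum_congr rfl fun i _ => ?_
    push_cast
    ring
  have hφG : substGeode σ G = 1 + substGeode σ G *
      ∑ n ∈ Finset.Icc 1 m, (n : PowerSeries ℚ) * u n := by
    have h1 := congrArg (substGeode σ) hGT
    rw [substGeode_add _ _ hσ0 hσout, substGeode_one, substGeode_mul hσ0 hσout, hφT] at h1
    exact h1
  constructor
  · linear_combination hφG
  · have h2 := congrArg (substGeode σ) hH
    rw [substGeode_mul hσ0 hσout, hφS, one_mul] at h2
    exact h2.symm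
end

section
/- (Theorem 5: H counts positive paths.) For every finitely supported function m : {1,2,…} → ℕ, the set of positive paths with up-step content m (with any number of down steps) is finite, and the coefficient of the monomial ∏_{i≥1} t_i^{m(i)} in H equals the cardinality of this set. -/
open MvPowerSeries

/-- A path is a finite list of integers all of whose entries are ≥ -1; entries ≥ 0 are
up steps and the entry -1 is the down step. -/
def IsPath (P : List ℤ) : Prop := ∀ s ∈ P, (-1 : ℤ) ≤ s

/-- A nonnegative path: a path all of whose prefix sums are ≥ 0. -/
def NonnegPath (P : List ℤ) : Prop := IsPath P ∧ ∀ i : ℕ, 0 ≤ (P.take i).sum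

/-- A positive path: a path all of whose nonempty prefix sums are > 0. -/
def PositivePath (P : List ℤ) : Prop :=
  IsPath P ∧ ∀ i : ℕ, 1 ≤ i → i ≤ P.length → 0 < (P.take i).sum

/-- An excursion: a nonnegative path with total sum 0. -/
def Excursion (P : List ℤ) : Prop := NonnegPath P ∧ P.sum = 0

/-- The path `P` has up-step content `m` if for every `i ≥ 1` it has exactly `m i`
steps equal to `i - 1`. -/
def HasContent (m : ℕ →₀ ℕ) (P : List ℤ) : Prop :=
  ∀ i : ℕ, 1 ≤ i → P.count ((i : ℤ) - 1) = m i

noncomputable section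
open Finsupp

/-- content of a path -/
def contentOf (W : List ℤ) : ℕ →₀ ℕ :=
  ((W.filter (fun s => 0 ≤ s)).map (fun s => Finsupp.single (s.toNat + 1) 1)).sum

@[simp] lemma contentOf_nil : contentOf ([] : List ℤ) = 0 := rfl

lemma contentOf_cons (s : ℤ) (W : List ℤ) :
    contentOf (s :: W) = (if 0 ≤ s then Finsupp.single (s.toNat + 1) 1 else 0) + contentOf W := by
  unfold contentOf
  by_cases h : (0:ℤ) ≤ s <;> simp [List.filter_cons, h]

lemma contentOf_append (A B : List ℤ) :
    contentOf (A ++ B) = contentOf A + contentOf B := by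
  unfold contentOf
  simp

@[simp] lemma contentOf_apply_zero (W : List ℤ) : contentOf W 0 = 0 := by
  induction W with
  | nil => simp
  | cons s W ih =>
      rw [contentOf_cons]
      by_cases h : (0:ℤ) ≤ s <;> simp [h, ih, Finsupp.single_apply]

lemma contentOf_apply (W : List ℤ) (i : ℕ) (hi : 1 ≤ i) :
    contentOf W i = W.count ((i : ℤ) - 1) := by
  induction W with
  | nil => simp
  | cons s W ih =>
      rw [contentOf_cons, List.count_cons]
      by_cases h : (0:ℤ) ≤ s
      · by_cases hs : s = (i:ℤ) - 1
        · have hti : s.toNat + 1 = i := by omega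
          simp only [if_pos h, Finsupp.add_apply, Finsupp.single_apply, if_pos hti, ih,
            beq_iff_eq, if_pos hs]
          omega
        · have hti : s.toNat + 1 ≠ i := by omega
          simp only [if_pos h, Finsupp.add_apply, Finsupp.single_apply, if_neg hti, ih,
            beq_iff_eq, if_neg hs]
          omega
      · have hs : ¬ (s = (i:ℤ) - 1) := by omega
        simp only [if_neg h, Finsupp.coe_zero, Pi.zero_apply, zero_add, ih, beq_iff_eq,
          if_neg hs]
        omega

lemma hasContent_iff {m : ℕ →₀ ℕ} (h0 : m 0 = 0) (W : List ℤ) :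
    HasContent m W ↔ contentOf W = m := by
  constructor
  · intro h
    ext i
    rcases Nat.eq_zero_or_pos i with rfl | hi
    · simp [h0]
    · rw [contentOf_apply W i hi, h i hi]
  · rintro rfl i hi
    rw [contentOf_apply W i hi]

end

def DPath (n : ℕ) (W : List ℤ) : Prop :=
  IsPath W ∧ (∀ i : ℕ, -(n:ℤ) ≤ (W.take i).sum) ∧ W.sum = -(n:ℤ)

def cset (Q : List ℤ → Prop) (m : ℕ →₀ ℕ) : Set (List ℤ) := {W | Q W ∧ contentOf W = m}

def upsum (m : ℕ →₀ ℕ) : ℤ := m.sum fun i c => ((i:ℤ) - 1) * c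
def csum (m : ℕ →₀ ℕ) : ℕ := m.sum fun _ c => c

lemma upsum_add (a b : ℕ →₀ ℕ) : upsum (a + b) = upsum a + upsum b :=
  Finsupp.sum_add_index' (fun i => by simp) (fun i c d => by push_cast; ring)

lemma csum_add (a b : ℕ →₀ ℕ) : csum (a + b) = csum a + csum b :=
  Finsupp.sum_add_index' (fun i => rfl) (fun i c d => rfl)

@[simp] lemma upsum_zero : upsum 0 = 0 := rfl
@[simp] lemma csum_zero : csum 0 = 0 := rfl

@[simp] lemma upsum_single (i c : ℕ) : upsum (Finsupp.single i c) = ((i:ℤ) - 1) * c := by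
  unfold upsum
  rcases Nat.eq_zero_or_pos c with rfl | hc
  · simp
  · rw [Finsupp.sum_single_index (by simp)]

@[simp] lemma csum_single (i c : ℕ) : csum (Finsupp.single i c) = c := by
  unfold csum
  rcases Nat.eq_zero_or_pos c with rfl | hc
  · simp
  · exact Finsupp.sum_single_index rfl

lemma sum_eq_of_isPath {W : List ℤ} (h : IsPath W) :
    W.sum = upsum (contentOf W) - W.count (-1) := by
  induction W with
  | nil => simp
  | cons s W ih =>
      have hs : (-1:ℤ) ≤ s := h s (List.mem_cons_self)
      have h' : IsPath W := fun x hx => h x (List.mem_cons_of_mem s hx)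
      rw [List.sum_cons, contentOf_cons, ih h', upsum_add]
      by_cases h0 : (0:ℤ) ≤ s
      · rw [List.count_cons_of_ne (by omega)]
        simp only [if_pos h0, upsum_single]
        push_cast
        omega
      · have hs1 : s = -1 := by omega
        subst hs1
        rw [List.count_cons_self]
        simp only [if_neg h0, upsum_zero]
        push_cast
        omega

lemma length_eq_of_isPath {W : List ℤ} (h : IsPath W) :
    W.length = csum (contentOf W) + W.count (-1) := by
  induction W with
  | nil => simp
  | cons s W ih =>
      have hs : (-1:ℤ) ≤ s := h s (List.mem_cons_self)
      have h' : IsPath W := fun x hx => h x (List.mem_cons_of_mem s hx)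
      rw [List.length_cons, contentOf_cons, ih h', csum_add]
      by_cases h0 : (0:ℤ) ≤ s
      · rw [List.count_cons_of_ne (by omega)]
        simp only [if_pos h0, csum_single]
        omega
      · have hs1 : s = -1 := by omega
        subst hs1
        rw [List.count_cons_self]
        simp only [if_neg h0, csum_zero]
        omega

lemma finite_lists {α : Type*} {s : Set α} (hs : s.Finite) (L : ℕ) :
    {l : List α | l.length ≤ L ∧ ∀ x ∈ l, x ∈ s}.Finite := by
  induction L with
  | zero =>
      apply Set.Finite.subset (Set.finite_singleton ([] : List α))
      rintro l ⟨hl, -⟩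
      simp [List.length_eq_zero_iff.mp (Nat.le_zero.mp hl)]
  | succ L ih =>
      apply Set.Finite.subset (Set.Finite.insert [] (Set.Finite.image2 List.cons hs ih))
      rintro l ⟨hl, hmem⟩
      cases l with
      | nil => exact Set.mem_insert _ _
      | cons a l =>
          refine Set.mem_insert_of_mem _ (Set.mem_image2_of_mem (hmem a List.mem_cons_self) ?_)
          exact ⟨by simpa using hl, fun x hx => hmem x (List.mem_cons_of_mem a hx)⟩

lemma finite_content_downs (m : ℕ →₀ ℕ) (K : ℕ) :
    {W : List ℤ | IsPath W ∧ contentOf W = m ∧ W.count (-1) ≤ K}.Finite := by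
  classical
  have hT : (insert (-1) ((fun i : ℕ => (i:ℤ) - 1) '' (m.support : Set ℕ)) : Set ℤ).Finite :=
    Set.Finite.insert _ (Set.Finite.image _ (m.support.finite_toSet))
  apply Set.Finite.subset (finite_lists hT (csum m + K))
  rintro W ⟨hpath, hcont, hK⟩
  constructor
  · rw [length_eq_of_isPath hpath, hcont]; omega
  · intro x hx
    have hx1 : (-1:ℤ) ≤ x := hpath x hx
    by_cases h0 : (0:ℤ) ≤ x
    · have h1 : 1 ≤ x.toNat + 1 := Nat.le_add_left 1 _
      have : contentOf W (x.toNat + 1) = W.count x := by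
        rw [contentOf_apply W _ h1]
        congr 1
        omega
      have hc : W.count x ≠ 0 := by
        simp only [ne_eq, List.count_eq_zero]
        exact fun h => h hx
      right
      exact ⟨x.toNat + 1, by rw [← hcont]; simpa [Finsupp.mem_support_iff, this] using hc,
        by show ((x.toNat + 1 : ℕ) : ℤ) - 1 = x; push_cast; omega⟩
    · left; omega

lemma finite_cset {Q : List ℤ → Prop} {n : ℤ} (hn : 0 ≤ n)
    (hQ : ∀ W, Q W → IsPath W ∧ -n ≤ W.sum) (m : ℕ →₀ ℕ) :
    (cset Q m).Finite := by
  apply Set.Finite.subset (finite_content_downs m (upsum m + n).toNat)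
  rintro W ⟨hQW, hcont⟩
  obtain ⟨hpath, hsum⟩ := hQ W hQW
  refine ⟨hpath, hcont, ?_⟩
  have := sum_eq_of_isPath hpath
  rw [hcont] at this
  omega

lemma DPath_isPath_sum {n : ℕ} {W : List ℤ} (h : DPath n W) : IsPath W ∧ -(n:ℤ) ≤ W.sum :=
  ⟨h.1, le_of_eq h.2.2.symm⟩

lemma nonneg_sum {W : List ℤ} (h : NonnegPath W) : IsPath W ∧ -(0:ℤ) ≤ W.sum := by
  refine ⟨h.1, ?_⟩
  have := h.2 W.length
  simpa using this

lemma positive_sum {W : List ℤ} (h : PositivePath W) : IsPath W ∧ -(0:ℤ) ≤ W.sum := by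
  refine ⟨h.1, ?_⟩
  cases W with
  | nil => simp
  | cons a l =>
      have := h.2 (a :: l).length (by simp) le_rfl
      simpa using this.le

lemma finite_cset_DPath (n : ℕ) (m : ℕ →₀ ℕ) : (cset (DPath n) m).Finite :=
  finite_cset (Int.ofNat_nonneg n) (fun _ h => DPath_isPath_sum h) m

lemma finite_cset_nonneg (m : ℕ →₀ ℕ) : (cset NonnegPath m).Finite :=
  finite_cset le_rfl (fun _ h => nonneg_sum h) m

lemma finite_cset_positive (m : ℕ →₀ ℕ) : (cset PositivePath m).Finite :=
  finite_cset le_rfl (fun _ h => positive_sum h) m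
/-! ### prefix sum helpers -/

lemma take_append_sum (A C : List ℤ) (i : ℕ) :
    ((A ++ C).take i).sum = (A.take i).sum + (C.take (i - A.length)).sum := by
  rw [List.take_append, List.sum_append]

lemma isPath_append {A B : List ℤ} : IsPath (A ++ B) ↔ IsPath A ∧ IsPath B := by
  constructor
  · exact fun h => ⟨fun x hx => h x (List.mem_append_left _ hx),
      fun x hx => h x (List.mem_append_right _ hx)⟩
  · rintro ⟨hA, hB⟩ x hx
    rcases List.mem_append.mp hx with h | h
    · exact hA x h
    · exact hB x h

lemma isPath_cons {s : ℤ} {B : List ℤ} : IsPath (s :: B) ↔ -1 ≤ s ∧ IsPath B := by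
  constructor
  · exact fun h => ⟨h s (List.mem_cons_self), fun x hx => h x (List.mem_cons_of_mem s hx)⟩
  · rintro ⟨hs, hB⟩ x hx
    rcases List.mem_cons.mp hx with rfl | h
    · exact hs
    · exact hB x h

lemma positive_psum_nonneg {P : List ℤ} (h : PositivePath P) (k : ℕ) : 0 ≤ (P.take k).sum := by
  rcases Nat.eq_zero_or_pos k with rfl | hk
  · simp
  · rcases le_or_gt k P.length with hkl | hkl
    · exact (h.2 k hk hkl).le
    · rw [List.take_of_length_le hkl.le]
      rcases Nat.eq_zero_or_pos P.length with hP | hP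
      · rw [List.length_eq_zero_iff.mp hP]; simp
      · have := h.2 P.length hP le_rfl
        rw [List.take_length] at this
        exact this.le

/-! ### Lemma A: splitting `DPath (n+1)` as `A ++ -1 :: B` -/

lemma DPath_join {n : ℕ} {A B : List ℤ} (hA : DPath 0 A) (hB : DPath n B) :
    DPath (n + 1) (A ++ -1 :: B) := by
  obtain ⟨hA1, hA2, hA3⟩ := hA
  obtain ⟨hB1, hB2, hB3⟩ := hB
  refine ⟨isPath_append.mpr ⟨hA1, isPath_cons.mpr ⟨le_rfl, hB1⟩⟩, ?_, ?_⟩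
  · intro i
    rw [take_append_sum]
    rcases le_or_gt i A.length with hi | hi
    · have : i - A.length = 0 := by omega
      rw [this]
      have := hA2 i
      simp only [Nat.cast_zero, neg_zero] at this
      push_cast
      simp only [List.take_zero, List.sum_nil, add_zero]
      omega
    · rw [List.take_of_length_le hi.le, hA3]
      obtain ⟨k, hk⟩ : ∃ k, i - A.length = k + 1 := ⟨i - A.length - 1, by omega⟩
      rw [hk, List.take_succ_cons, List.sum_cons]
      have := hB2 k
      push_cast
      omega
  · rw [List.sum_append, List.sum_cons, hA3, hB3]
    push_cast
    ring

lemma DPath_split {n : ℕ} {W : List ℤ} (h : DPath (n + 1) W) :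
    ∃ A B, DPath 0 A ∧ DPath n B ∧ W = A ++ -1 :: B := by
  obtain ⟨h1, h2, h3⟩ := h
  have hex : ∃ i, ((W.take i).sum < 0) := by
    refine ⟨W.length, ?_⟩
    rw [List.take_length, h3]
    push_cast
    omega
  classical
  set i₀ := Nat.find hex with hi₀
  have hspec : (W.take i₀).sum < 0 := Nat.find_spec hex
  have hle : i₀ ≤ W.length := by
    apply Nat.find_min' hex
    rw [List.take_length, h3]; push_cast; omega
  have hne : i₀ ≠ 0 := by
    intro h0
    rw [h0] at hspec
    simp at hspec
  obtain ⟨j, hj⟩ : ∃ j, i₀ = j + 1 := ⟨i₀ - 1, by omega⟩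
  have hjlt : j < W.length := by omega
  have hjnn : 0 ≤ (W.take j).sum := by
    have := Nat.find_min hex (m := j) (by omega)
    omega
  have hsucc : (W.take (j+1)).sum = (W.take j).sum + W[j] := by
    rw [List.take_succ, List.getElem?_eq_getElem hjlt, Option.toList_some, List.sum_append,
      List.sum_singleton]
  have hWj : W[j] = -1 ∧ (W.take j).sum = 0 := by
    have hmem : (-1:ℤ) ≤ W[j] := h1 _ (List.getElem_mem hjlt)
    rw [hj] at hspec
    constructor <;> omega
  refine ⟨W.take j, W.drop (j+1), ⟨?_, ?_, ?_⟩, ⟨?_, ?_, ?_⟩, ?_⟩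
  · exact fun x hx => h1 x (List.take_subset _ _ hx)
  · intro i
    rw [List.take_take]
    have := Nat.find_min hex (m := min i j) (by omega)
    push_cast
    omega
  · simpa using hWj.2
  · exact fun x hx => h1 x (List.drop_subset _ _ hx)
  · intro k
    have hadd : (W.take (j+1+k)).sum = (W.take (j+1)).sum + ((W.drop (j+1)).take k).sum := by
      rw [List.take_add, List.sum_append]
    have h21 := h2 (j+1+k)
    rw [hj] at hspec
    push_cast at h21 ⊢
    omega
  · have : (W.take (j+1)).sum + (W.drop (j+1)).sum = W.sum := by
      rw [← List.sum_append, List.take_append_drop]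
    rw [hj] at hspec
    push_cast
    omega
  · conv_lhs => rw [← List.take_append_drop j W]
    rw [List.drop_eq_getElem_cons hjlt, hWj.1]

lemma DPath_split_unique {A A' B B' : List ℤ} (hA : DPath 0 A) (hA' : DPath 0 A')
    (heq : A ++ -1 :: B = A' ++ -1 :: B') : A = A' ∧ B = B' := by
  have hlen : A.length = A'.length := by
    by_contra hne
    -- wlog via both directions
    have key : ∀ (X X' Y Y' : List ℤ), DPath 0 X → DPath 0 X' →
        X ++ -1 :: Y = X' ++ -1 :: Y' → X.length < X'.length → False := by
      intro X X' Y Y' hX hX' he hlt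
      have h1 : (((X ++ -1 :: Y).take (X.length + 1))).sum = -1 := by
        rw [take_append_sum, List.take_of_length_le (by omega), hX.2.2]
        have : X.length + 1 - X.length = 1 := by omega
        rw [this]
        simp
      have h2 : 0 ≤ (((X' ++ -1 :: Y').take (X.length + 1))).sum := by
        rw [take_append_sum]
        have h0 : X.length + 1 - X'.length = 0 := by omega
        rw [h0]
        have := hX'.2.1 (X.length + 1)
        simp only [List.take_zero, List.sum_nil, add_zero]
        simpa using this
      rw [he] at h1
      omega
    rcases Nat.lt_or_ge A.length A'.length with hlt | hge
    · exact key A A' B B' hA hA' heq hlt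
    · exact key A' A B' B hA' hA heq.symm (by omega)
  obtain ⟨h1, h2⟩ := List.append_inj heq hlen
  exact ⟨h1, by simpa using h2⟩
/-! ### Lemma B: first step of an excursion -/

lemma DPath_zero_cons_iff {s : ℤ} {B : List ℤ} :
    DPath 0 (s :: B) ↔ 0 ≤ s ∧ DPath s.toNat B := by
  constructor
  · rintro ⟨h1, h2, h3⟩
    have hs : 0 ≤ s := by
      have := h2 1
      simpa using this
    refine ⟨hs, (isPath_cons.mp h1).2, ?_, ?_⟩
    · intro k
      have := h2 (k + 1)
      rw [List.take_succ_cons, List.sum_cons] at this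
      push_cast
      omega
    · rw [List.sum_cons] at h3
      push_cast
      omega
  · rintro ⟨hs, h1, h2, h3⟩
    refine ⟨isPath_cons.mpr ⟨by omega, h1⟩, ?_, ?_⟩
    · intro i
      cases i with
      | zero => simp
      | succ k =>
          rw [List.take_succ_cons, List.sum_cons]
          have := h2 k
          push_cast at this ⊢
          omega
    · rw [List.sum_cons, h3]
      push_cast
      omega

/-! ### Lemma D: nonneg path = excursion ++ positive path -/

lemma NN_join {E P : List ℤ} (hE : DPath 0 E) (hP : PositivePath P) : NonnegPath (E ++ P) := by
  refine ⟨isPath_append.mpr ⟨hE.1, hP.1⟩, ?_⟩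
  intro i
  rw [take_append_sum]
  have h1 : 0 ≤ (E.take i).sum := by
    have := hE.2.1 i
    simpa using this
  have h2 := positive_psum_nonneg hP (i - E.length)
  omega

lemma NN_split {W : List ℤ} (h : NonnegPath W) :
    ∃ E P, DPath 0 E ∧ PositivePath P ∧ W = E ++ P := by
  classical
  set j := Nat.findGreatest (fun i => (W.take i).sum = 0) W.length with hj
  have hspec : (W.take j).sum = 0 :=
    Nat.findGreatest_spec (P := fun i => (W.take i).sum = 0) (m := 0) (Nat.zero_le _) (by simp)
  have hjle : j ≤ W.length := Nat.findGreatest_le _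
  refine ⟨W.take j, W.drop j, ⟨?_, ?_, ?_⟩, ⟨?_, ?_⟩, (List.take_append_drop j W).symm⟩
  · exact fun x hx => h.1 x (List.take_subset _ _ hx)
  · intro i
    rw [List.take_take]
    have := h.2 (min i j)
    simpa using this
  · simpa using hspec
  · exact fun x hx => h.1 x (List.drop_subset _ _ hx)
  · intro k hk1 hk2
    have hadd : (W.take (j+k)).sum = (W.take j).sum + ((W.drop j).take k).sum := by
      rw [List.take_add, List.sum_append]
    have hnn := h.2 (j + k)
    have hgr : (W.take (j + k)).sum ≠ 0 := by
      exact Nat.findGreatest_is_greatest (P := fun i => (W.take i).sum = 0) (n := W.length)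
        (by rw [← hj]; omega) (by rw [List.length_drop] at hk2; omega)
    omega

lemma NN_split_unique {E E' P P' : List ℤ} (hE : DPath 0 E) (hE' : DPath 0 E')
    (hP : PositivePath P) (hP' : PositivePath P') (heq : E ++ P = E' ++ P') :
    E = E' ∧ P = P' := by
  have key : ∀ (X X' Y Y' : List ℤ), DPath 0 X → DPath 0 X' → PositivePath Y →
      X ++ Y = X' ++ Y' → X.length < X'.length → False := by
    intro X X' Y Y' hX hX' hY he hlt
    have hlen : X'.length ≤ (X ++ Y).length := by
      rw [he, List.length_append]
      omega
    have h1 : ((X ++ Y).take X'.length).sum = (Y.take (X'.length - X.length)).sum := by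
      rw [take_append_sum, List.take_of_length_le hlt.le, hX.2.2]
      simp
    have h2 : ((X' ++ Y').take X'.length).sum = 0 := by
      rw [take_append_sum, Nat.sub_self, List.take_length]
      simpa [hX'.2.2] using hX'.2.2
    have hpos : 0 < (Y.take (X'.length - X.length)).sum := by
      apply hY.2 _ (by omega)
      rw [List.length_append] at hlen
      omega
    rw [he, h2] at h1
    omega
  have hlen : E.length = E'.length := by
    rcases Nat.lt_trichotomy E.length E'.length with h | h | h
    · exact absurd (key E E' P P' hE hE' hP heq h) not_false
    · exact h
    · exact absurd (key E' E P' P hE' hE hP' heq.symm h) not_false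
  exact List.append_inj heq hlen

/-! ### Lemma C: nonempty excursion = nonneg ++ up-step ++ downs -/

lemma strip_trailing (W : List ℤ) (hpath : IsPath W) (hup : ∃ x ∈ W, 0 ≤ x) :
    ∃ W₁ s k, 0 ≤ s ∧ W = W₁ ++ s :: List.replicate k (-1) := by
  induction W using List.reverseRecOn with
  | nil => simp at hup
  | append_singleton W' a ih =>
      by_cases ha : 0 ≤ a
      · exact ⟨W', a, 0, ha, by simp⟩
      · have ha1 : a = -1 := by
          have := hpath a (List.mem_append_right _ (List.mem_singleton_self a))
          omega
        obtain ⟨x, hx, hx0⟩ := hup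
        have hx' : x ∈ W' := by
          rcases List.mem_append.mp hx with h | h
          · exact h
          · rw [List.mem_singleton.mp h] at hx0; omega
        obtain ⟨W₁, s, k, hs, hW'⟩ :=
          ih (fun y hy => hpath y (List.mem_append_left _ hy)) ⟨x, hx', hx0⟩
        refine ⟨W₁, s, k + 1, hs, ?_⟩
        rw [ha1, hW', List.replicate_succ', List.append_assoc]
        simp

lemma exc_join {W₁ : List ℤ} {s : ℤ} (hW₁ : NonnegPath W₁) (hs : 0 ≤ s) :
    DPath 0 (W₁ ++ s :: List.replicate (W₁.sum + s).toNat (-1)) := by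
  have hsum : 0 ≤ W₁.sum := by have := (nonneg_sum hW₁).2; omega
  refine ⟨?_, ?_, ?_⟩
  · apply isPath_append.mpr
    refine ⟨hW₁.1, isPath_cons.mpr ⟨by omega, fun x hx => ?_⟩⟩
    rw [List.eq_of_mem_replicate hx]
  · intro i
    rw [take_append_sum]
    have h1 := hW₁.2 i
    rcases Nat.eq_zero_or_pos (i - W₁.length) with h0 | h0
    · rw [h0]
      simpa using h1
    · obtain ⟨k, hk⟩ : ∃ k, i - W₁.length = k + 1 := ⟨i - W₁.length - 1, by omega⟩
      have hW₁i : W₁.take i = W₁ := List.take_of_length_le (by omega)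
      rw [hk, hW₁i, List.take_succ_cons, List.sum_cons, List.take_replicate,
        List.sum_replicate, nsmul_eq_mul]
      have : (min k (W₁.sum + s).toNat : ℤ) ≤ W₁.sum + s := by
        have := Int.toNat_of_nonneg (by omega : (0:ℤ) ≤ W₁.sum + s)
        have h2 : (min k (W₁.sum + s).toNat : ℕ) ≤ (W₁.sum + s).toNat := min_le_right _ _
        omega
      push_cast at this ⊢
      omega
  · rw [List.sum_append, List.sum_cons, List.sum_replicate, nsmul_eq_mul]
    have := Int.toNat_of_nonneg (by omega : (0:ℤ) ≤ W₁.sum + s)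
    push_cast
    omega

lemma exc_split {W : List ℤ} (h : DPath 0 W) (hne : W ≠ []) :
    ∃ W₁ s, NonnegPath W₁ ∧ 0 ≤ s ∧
      W = W₁ ++ s :: List.replicate (W₁.sum + s).toNat (-1) := by
  obtain ⟨w, W'', rfl⟩ := List.exists_cons_of_ne_nil hne
  have hup : ∃ x ∈ w :: W'', (0:ℤ) ≤ x := by
    refine ⟨w, List.mem_cons_self, ?_⟩
    exact (DPath_zero_cons_iff.mp h).1
  obtain ⟨W₁, s, k, hs, hW⟩ := strip_trailing _ h.1 hup
  have hW₁ : NonnegPath W₁ := by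
    refine ⟨fun x hx => h.1 x (by rw [hW]; exact List.mem_append_left _ hx), fun i => ?_⟩
    have h0 := h.2.1 (min i W₁.length)
    rw [hW, take_append_sum] at h0
    have hz : min i W₁.length - W₁.length = 0 := by omega
    rw [hz] at h0
    simp only [List.take_zero, List.sum_nil, add_zero] at h0
    rcases le_or_gt i W₁.length with hi | hi
    · have hmin : min i W₁.length = i := by omega
      rw [hmin] at h0
      simpa using h0
    · have hmin : min i W₁.length = W₁.length := by omega
      rw [hmin, List.take_length] at h0
      rw [List.take_of_length_le hi.le]
      simpa using h0
  have hk : (k : ℤ) = W₁.sum + s := by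
    have := h.2.2
    rw [hW, List.sum_append, List.sum_cons, List.sum_replicate, nsmul_eq_mul] at this
    push_cast at this
    omega
  refine ⟨W₁, s, hW₁, hs, ?_⟩
  have hkk : (W₁.sum + s).toNat = k := by omega
  rw [hW, hkk]

lemma takeWhile_rep_aux (p : ℤ → Bool) (k : ℕ) (a b : ℤ) (v : List ℤ) (ha : p a) (hb : ¬ p b) :
    (List.replicate k a ++ b :: v).takeWhile p = List.replicate k a ∧
    (List.replicate k a ++ b :: v).dropWhile p = b :: v := by
  induction k with
  | zero => simp [List.takeWhile_cons, List.dropWhile_cons, hb]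
  | succ n ih =>
      rw [List.replicate_succ]
      simp only [List.cons_append, List.takeWhile_cons, List.dropWhile_cons, ha, if_pos]
      simp [ha, ih.1, ih.2]

lemma exc_split_unique {W₁ W₁' : List ℤ} {s s' : ℤ} {k k' : ℕ} (hs : 0 ≤ s) (hs' : 0 ≤ s')
    (heq : W₁ ++ s :: List.replicate k (-1) = W₁' ++ s' :: List.replicate k' (-1)) :
    W₁ = W₁' ∧ s = s' ∧ k = k' := by
  have hrev := congrArg List.reverse heq
  rw [List.reverse_append, List.reverse_append, List.reverse_cons, List.reverse_cons,
    List.reverse_replicate, List.reverse_replicate, List.append_assoc, List.append_assoc,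
    List.singleton_append, List.singleton_append] at hrev
  set p : ℤ → Bool := fun x => decide (x < 0) with hp
  have hpa : p (-1) = true := by simp [hp]
  have h1 := takeWhile_rep_aux p k (-1) s W₁.reverse hpa (by simp [hp]; omega)
  have h2 := takeWhile_rep_aux p k' (-1) s' W₁'.reverse hpa (by simp [hp]; omega)
  have htw : List.replicate k (-1:ℤ) = List.replicate k' (-1:ℤ) := by
    rw [← h1.1, ← h2.1, hrev]
  have hdw : s :: W₁.reverse = s' :: W₁'.reverse := by
    rw [← h1.2, ← h2.2, hrev]
  have hk : k = k' := by
    have := congrArg List.length htw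
    simpa using this
  have hsslist := List.cons.injEq .. ▸ hdw
  refine ⟨?_, List.head_eq_of_cons_eq hdw, hk⟩
  have := List.tail_eq_of_cons_eq hdw
  have := congrArg List.reverse this
  simpa using this
/-! ### counting tools -/

lemma ncard_biUnion_finset {ι α : Type*} (s : Finset ι) (f : ι → Set α)
    (hfin : ∀ i ∈ s, (f i).Finite)
    (hdisj : ∀ i ∈ s, ∀ j ∈ s, i ≠ j → Disjoint (f i) (f j)) :
    (⋃ i ∈ s, f i).ncard = ∑ i ∈ s, (f i).ncard := by
  classical
  induction s using Finset.induction with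
  | empty => simp
  | @insert a s ha ih =>
      rw [Finset.set_biUnion_insert, Finset.sum_insert ha]
      rw [Set.ncard_union_eq ?hd ?h1 ?h2]
      · rw [ih (fun i hi => hfin i (Finset.mem_insert_of_mem hi))
          (fun i hi j hj hij => hdisj i (Finset.mem_insert_of_mem hi)
            j (Finset.mem_insert_of_mem hj) hij)]
      case hd =>
        simp only [Set.disjoint_iUnion_right]
        intro i hi
        exact hdisj a (Finset.mem_insert_self a s) i (Finset.mem_insert_of_mem hi)
          (fun h => ha (h ▸ hi))
      case h1 => exact hfin a (Finset.mem_insert_self a s)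
      case h2 =>
        exact Set.Finite.biUnion s.finite_toSet
          (fun i hi => hfin i (Finset.mem_insert_of_mem hi))

lemma ncard_image2 {α β γ : Type*} (f : α → β → γ) (A : Set α) (B : Set β)
    (hA : A.Finite) (hB : B.Finite)
    (hinj : ∀ a ∈ A, ∀ b ∈ B, ∀ a' ∈ A, ∀ b' ∈ B, f a b = f a' b' → a = a' ∧ b = b') :
    (Set.image2 f A B).ncard = A.ncard * B.ncard := by
  rw [← Set.image_prod, Set.ncard_image_of_injOn]
  · rw [← Nat.card_coe_set_eq, Nat.card_congr (Equiv.Set.prod A B), Nat.card_prod,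
      Nat.card_coe_set_eq, Nat.card_coe_set_eq]
  · rintro ⟨a, b⟩ ⟨ha, hb⟩ ⟨a', b'⟩ ⟨ha', hb'⟩ h
    obtain ⟨h1, h2⟩ := hinj a ha b hb a' ha' b' hb' h
    simp [h1, h2]

/-! ### convolution counting -/

lemma ncard_cset_mul {Q1 Q2 Q3 : List ℤ → Prop} (f : List ℤ → List ℤ → List ℤ)
    (hmem : ∀ A B, Q1 A → Q2 B → Q3 (f A B) ∧ contentOf (f A B) = contentOf A + contentOf B)
    (hsplit : ∀ W, Q3 W → ∃ A B, Q1 A ∧ Q2 B ∧ f A B = W)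
    (hinj : ∀ A B A' B', Q1 A → Q2 B → Q1 A' → Q2 B' → f A B = f A' B' → A = A' ∧ B = B')
    (hfin1 : ∀ a, (cset Q1 a).Finite) (hfin2 : ∀ b, (cset Q2 b).Finite) (m : ℕ →₀ ℕ) :
    (cset Q3 m).ncard
      = ∑ p ∈ Finset.HasAntidiagonal.antidiagonal m, (cset Q1 p.1).ncard * (cset Q2 p.2).ncard := by
  classical
  have hset : cset Q3 m
      = ⋃ p ∈ Finset.HasAntidiagonal.antidiagonal m, Set.image2 f (cset Q1 p.1) (cset Q2 p.2) := by
    ext W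
    simp only [Set.mem_iUnion, Finset.HasAntidiagonal.mem_antidiagonal, Set.mem_image2, exists_prop]
    constructor
    · rintro ⟨hQ3, hcont⟩
      obtain ⟨A, B, hA, hB, hfab⟩ := hsplit W hQ3
      obtain ⟨-, hc⟩ := hmem A B hA hB
      exact ⟨(contentOf A, contentOf B), by rw [← hcont, ← hfab, hc],
        A, ⟨hA, rfl⟩, B, ⟨hB, rfl⟩, hfab⟩
    · rintro ⟨⟨a, b⟩, hab, A, ⟨hA, hca⟩, B, ⟨hB, hcb⟩, hfab⟩
      obtain ⟨h3, hc⟩ := hmem A B hA hB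
      exact ⟨hfab ▸ h3, by rw [← hfab, hc, hca, hcb, hab]⟩
  rw [hset, ncard_biUnion_finset]
  · exact Finset.sum_congr rfl fun p _ => ncard_image2 f _ _ (hfin1 p.1) (hfin2 p.2)
      (fun A hA B hB A' hA' B' hB' h => hinj A B A' B' hA.1 hB.1 hA'.1 hB'.1 h)
  · exact fun p _ => Set.Finite.image2 f (hfin1 p.1) (hfin2 p.2)
  · rintro p hp q hq hpq
    rw [Set.disjoint_left]
    rintro W ⟨A, hA, B, hB, hW⟩ ⟨A', hA', B', hB', hW'⟩
    obtain ⟨rfl, rfl⟩ := hinj A B A' B' hA.1 hB.1 hA'.1 hB'.1 (hW.trans hW'.symm)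
    exact hpq (Prod.ext (hA.2 ▸ hA'.2.symm ▸ rfl) (hB.2 ▸ hB'.2.symm ▸ rfl))

lemma ncard_cset_sigma {Q3 : List ℤ → Prop} {Q : ℕ → List ℤ → Prop}
    (g : ℕ → List ℤ → List ℤ)
    (hmem : ∀ i B, 1 ≤ i → Q i B →
      Q3 (g i B) ∧ contentOf (g i B) = Finsupp.single i 1 + contentOf B)
    (hsplit : ∀ W, Q3 W → ∃ i B, 1 ≤ i ∧ Q i B ∧ g i B = W)
    (hinj : ∀ i B i' B', 1 ≤ i → Q i B → 1 ≤ i' → Q i' B' → g i B = g i' B' → i = i' ∧ B = B')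
    (hfin : ∀ i a, (cset (Q i) a).Finite) (m : ℕ →₀ ℕ) (hm0 : m 0 = 0) :
    (cset Q3 m).ncard
      = ∑ i ∈ m.support, (cset (Q i) (m - Finsupp.single i 1)).ncard := by
  classical
  have hset : cset Q3 m
      = ⋃ i ∈ m.support, (g i) '' (cset (Q i) (m - Finsupp.single i 1)) := by
    ext W
    simp only [Set.mem_iUnion, Finsupp.mem_support_iff, Set.mem_image, exists_prop]
    constructor
    · rintro ⟨hQ3, hcont⟩
      obtain ⟨i, B, hi, hB, hgib⟩ := hsplit W hQ3
      obtain ⟨-, hc⟩ := hmem i B hi hB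
      have hmi : m = Finsupp.single i 1 + contentOf B := by rw [← hcont, ← hgib, hc]
      refine ⟨i, ?_, B, ⟨hB, ?_⟩, hgib⟩
      · rw [hmi]
        simp [Finsupp.single_apply]
      · rw [hmi, add_tsub_cancel_left]
    · rintro ⟨i, hi, B, ⟨hB, hcb⟩, hgib⟩
      have hi1 : 1 ≤ i := by
        rcases Nat.eq_zero_or_pos i with rfl | h
        · exact absurd hm0 hi
        · exact h
      obtain ⟨h3, hc⟩ := hmem i B hi1 hB
      refine ⟨hgib ▸ h3, ?_⟩
      rw [← hgib, hc, hcb, add_tsub_cancel_of_le]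
      rw [Finsupp.single_le_iff]
      omega
  rw [hset, ncard_biUnion_finset]
  · refine Finset.sum_congr rfl fun i hi => Set.ncard_image_of_injOn ?_
    intro B hB B' hB' h
    have hi1 : 1 ≤ i := by
      rcases Nat.eq_zero_or_pos i with rfl | h
      · exact absurd hm0 (Finsupp.mem_support_iff.mp hi)
      · exact h
    exact (hinj i B i B' hi1 hB.1 hi1 hB'.1 h).2
  · exact fun i _ => Set.Finite.image _ (hfin i _)
  · intro i hi j hj hij
    rw [Set.disjoint_left]
    rintro W ⟨B, hB, hW⟩ ⟨B', hB', hW'⟩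
    have hi1 : 1 ≤ i := by
      rcases Nat.eq_zero_or_pos i with rfl | h
      · exact absurd hm0 (Finsupp.mem_support_iff.mp hi)
      · exact h
    have hj1 : 1 ≤ j := by
      rcases Nat.eq_zero_or_pos j with rfl | h
      · exact absurd hm0 (Finsupp.mem_support_iff.mp hj)
      · exact h
    exact hij (hinj i B j B' hi1 hB.1 hj1 hB'.1 (hW.trans hW'.symm)).1
/-! ### the three counting identities -/

lemma contentOf_replicate (k : ℕ) : contentOf (List.replicate k (-1:ℤ)) = 0 := by
  induction k with
  | zero => simp
  | succ n ih =>
      rw [List.replicate_succ, contentOf_cons, ih, if_neg (by omega)]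
      simp

lemma cardD (n : ℕ) (m : ℕ →₀ ℕ) :
    (cset (DPath (n+1)) m).ncard
      = ∑ p ∈ Finset.HasAntidiagonal.antidiagonal m, (cset (DPath 0) p.1).ncard * (cset (DPath n) p.2).ncard := by
  refine ncard_cset_mul (fun A B => A ++ -1 :: B) ?_ ?_ ?_
    (finite_cset_DPath 0) (finite_cset_DPath n) m
  · intro A B hA hB
    refine ⟨DPath_join hA hB, ?_⟩
    rw [contentOf_append, contentOf_cons, if_neg (by omega), zero_add]
  · intro W hW
    obtain ⟨A, B, hA, hB, hW⟩ := DPath_split hW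
    exact ⟨A, B, hA, hB, hW.symm⟩
  · exact fun A B A' B' hA _ hA' _ h => DPath_split_unique hA hA' h

lemma cardNN (m : ℕ →₀ ℕ) :
    (cset NonnegPath m).ncard
      = ∑ p ∈ Finset.HasAntidiagonal.antidiagonal m,
          (cset (DPath 0) p.1).ncard * (cset PositivePath p.2).ncard := by
  refine ncard_cset_mul (· ++ ·) ?_ ?_ ?_ (finite_cset_DPath 0) finite_cset_positive m
  · intro A B hA hB
    exact ⟨NN_join hA hB, contentOf_append A B⟩
  · intro W hW
    obtain ⟨E, P, hE, hP, hW⟩ := NN_split hW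
    exact ⟨E, P, hE, hP, hW.symm⟩
  · exact fun A B A' B' hA hB hA' hB' h => NN_split_unique hA hA' hB hB' h

lemma cardExcCons (m : ℕ →₀ ℕ) (hm0 : m 0 = 0) :
    (cset (fun W => DPath 0 W ∧ W ≠ []) m).ncard
      = ∑ i ∈ m.support, (cset (DPath (i-1)) (m - Finsupp.single i 1)).ncard := by
  refine ncard_cset_sigma (fun i B => ((i:ℤ) - 1) :: B) ?_ ?_ ?_
    (fun i => finite_cset_DPath (i-1)) m hm0
  · intro i B hi hB
    have htn : ((i:ℤ) - 1).toNat = i - 1 := by omega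
    refine ⟨⟨DPath_zero_cons_iff.mpr ⟨by push_cast; omega, htn ▸ hB⟩, by simp⟩, ?_⟩
    rw [contentOf_cons, if_pos (by push_cast; omega)]
    congr 2
    omega
  · rintro W ⟨hW, hne⟩
    obtain ⟨s, B, rfl⟩ := List.exists_cons_of_ne_nil hne
    obtain ⟨hs, hB⟩ := DPath_zero_cons_iff.mp hW
    refine ⟨s.toNat + 1, B, by omega, ?_, ?_⟩
    · simpa using hB
    · show (((s.toNat + 1 : ℕ) : ℤ) - 1) :: B = s :: B
      have hts : ((s.toNat + 1 : ℕ) : ℤ) - 1 = s := by omega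
      rw [hts]
  · intro i B i' B' hi hB hi' hB' h
    have h1 := List.head_eq_of_cons_eq h
    have h2 := List.tail_eq_of_cons_eq h
    exact ⟨by omega, h2⟩

lemma cardExcStrip (m : ℕ →₀ ℕ) (hm0 : m 0 = 0) :
    (cset (fun W => DPath 0 W ∧ W ≠ []) m).ncard
      = ∑ i ∈ m.support, (cset NonnegPath (m - Finsupp.single i 1)).ncard := by
  refine ncard_cset_sigma
    (fun i B => B ++ ((i:ℤ) - 1) :: List.replicate ((B.sum + ((i:ℤ)-1)).toNat) (-1)) ?_ ?_ ?_
    (fun _ => finite_cset_nonneg) m hm0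
  · intro i B hi hB
    have hs : (0:ℤ) ≤ (i:ℤ) - 1 := by push_cast; omega
    refine ⟨⟨exc_join hB hs, by simp⟩, ?_⟩
    rw [contentOf_append, contentOf_cons, if_pos hs, contentOf_replicate, add_zero]
    rw [add_comm]
    congr 2
    omega
  · rintro W ⟨hW, hne⟩
    obtain ⟨W₁, s, hW₁, hs, hWeq⟩ := exc_split hW hne
    refine ⟨s.toNat + 1, W₁, by omega, hW₁, ?_⟩
    have hts : ((s.toNat + 1 : ℕ) : ℤ) - 1 = s := by omega
    show W₁ ++ (((s.toNat + 1 : ℕ) : ℤ) - 1) :: List.replicate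
      ((W₁.sum + (((s.toNat + 1 : ℕ) : ℤ) - 1)).toNat) (-1) = W
    rw [hts, hWeq]
  · intro i B i' B' hi hB hi' hB' h
    have hs : (0:ℤ) ≤ (i:ℤ) - 1 := by push_cast; omega
    have hs' : (0:ℤ) ≤ (i':ℤ) - 1 := by push_cast; omega
    obtain ⟨hB, hss, -⟩ := exc_split_unique hs hs' h
    exact ⟨by omega, hB⟩

lemma cset_D0_zero : cset (DPath 0) 0 = {([] : List ℤ)} := by
  ext W
  simp only [Set.mem_singleton_iff, cset, Set.mem_setOf_eq]
  constructor
  · rintro ⟨hW, hc⟩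
    have h1 := sum_eq_of_isPath hW.1
    have h2 := length_eq_of_isPath hW.1
    rw [hc] at h1 h2
    simp only [upsum_zero, csum_zero, zero_sub, zero_add] at h1 h2
    have h3 : W.sum = -(0:ℤ) := hW.2.2
    have : W.length = 0 := by omega
    exact List.length_eq_zero_iff.mp this
  · rintro rfl
    exact ⟨⟨fun x hx => absurd hx List.not_mem_nil, fun i => by simp, by simp⟩, rfl⟩

lemma ncard_cset_D0 (m : ℕ →₀ ℕ) :
    (cset (DPath 0) m).ncard
      = (if m = 0 then 1 else 0) + (cset (fun W => DPath 0 W ∧ W ≠ []) m).ncard := by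
  by_cases hm : m = 0
  · subst hm
    rw [if_pos rfl, cset_D0_zero]
    have : cset (fun W => DPath 0 W ∧ W ≠ []) 0 = ∅ := by
      ext W
      simp only [cset, Set.mem_setOf_eq, Set.mem_empty_iff_false, iff_false, not_and]
      rintro ⟨hW, hne⟩ hc
      have h1 := sum_eq_of_isPath hW.1
      have h2 := length_eq_of_isPath hW.1
      rw [hc] at h1 h2
      simp only [upsum_zero, csum_zero, zero_sub, zero_add] at h1 h2
      have h3 : W.sum = -(0:ℤ) := hW.2.2
      have : W.length = 0 := by omega
      exact hne (List.length_eq_zero_iff.mp this)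
    rw [this]
    simp
  · rw [if_neg hm, zero_add]
    congr 1
    ext W
    simp only [cset, Set.mem_setOf_eq]
    constructor
    · rintro ⟨hW, hc⟩
      refine ⟨⟨hW, ?_⟩, hc⟩
      rintro rfl
      exact hm (by simpa using hc.symm)
    · rintro ⟨⟨hW, -⟩, hc⟩
      exact ⟨hW, hc⟩
/-! ### power series tools -/

noncomputable instance : T2Space (MvPowerSeries ℕ ℚ) :=
  inferInstanceAs (T2Space ((ℕ →₀ ℕ) → ℚ))

open MvPowerSeries

lemma tsum_eq_fun (f : ℕ → MvPowerSeries ℕ ℚ) (T : (ℕ →₀ ℕ) → Finset ℕ)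
    (hf : ∀ m n, n ∉ T m → coeff m (f n) = 0) :
    ∑' n, f n = fun m => ∑ n ∈ T m, coeff m (f n) := by
  have h : HasSum f (fun m => ∑ n ∈ T m, coeff m (f n)) := by
    apply Pi.hasSum.mpr
    intro m
    exact hasSum_sum_of_ne_finset_zero (fun n hn => hf m n hn)
  exact h.tsum_eq

lemma coeff_tsum (f : ℕ → MvPowerSeries ℕ ℚ) (T : (ℕ →₀ ℕ) → Finset ℕ)
    (hf : ∀ m n, n ∉ T m → coeff m (f n) = 0) (m : ℕ →₀ ℕ) :
    coeff m (∑' n, f n) = ∑ n ∈ T m, coeff m (f n) := by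
  rw [tsum_eq_fun f T hf]
  rfl

/-- the index finset of variables occurring in `m`, shifted down by one -/
def Tm (m : ℕ →₀ ℕ) : Finset ℕ := m.support.image (fun i => i - 1)

lemma coeff_X_mul' (n : ℕ) (φ : MvPowerSeries ℕ ℚ) (m : ℕ →₀ ℕ) :
    coeff m (X (n+1) * φ)
      = if Finsupp.single (n+1) 1 ≤ m then coeff (m - Finsupp.single (n+1) 1) φ else 0 := by
  rw [X, coeff_monomial_mul]
  split <;> simp

lemma notin_Tm {m : ℕ →₀ ℕ} {n : ℕ} (hn : n ∉ Tm m) : ¬ Finsupp.single (n+1) 1 ≤ m := by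
  intro hle
  apply hn
  have h1 : 1 ≤ m (n+1) := by
    have := hle (n+1)
    simpa using this
  exact Finset.mem_image.mpr ⟨n+1, Finsupp.mem_support_iff.mpr (by omega), rfl⟩

lemma coeff_X_mul_vanish (φ : MvPowerSeries ℕ ℚ) {m : ℕ →₀ ℕ} {n : ℕ} (hn : n ∉ Tm m) :
    coeff m (X (n+1) * φ) = 0 := by
  rw [coeff_X_mul', if_neg (notin_Tm hn)]

lemma coeff_X_vanish {m : ℕ →₀ ℕ} {n : ℕ} (hn : n ∉ Tm m) :
    coeff m (X (n+1) : MvPowerSeries ℕ ℚ) = 0 := by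
  have := coeff_X_mul_vanish (1 : MvPowerSeries ℕ ℚ) hn
  rwa [mul_one] at this

/-- coefficient recursion for a fixed point of the Łukasiewicz equation -/
lemma coeff_fix {A : MvPowerSeries ℕ ℚ}
    (hA : A = 1 + ∑' n : ℕ, (X (n + 1) : MvPowerSeries ℕ ℚ) * A ^ (n + 1)) (m : ℕ →₀ ℕ) :
    coeff m A = (if m = 0 then 1 else 0)
      + ∑ n ∈ Tm m, coeff m ((X (n + 1) : MvPowerSeries ℕ ℚ) * A ^ (n + 1)) := by
  classical
  conv_lhs => rw [hA]
  rw [map_add, coeff_one,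
    coeff_tsum _ Tm (fun m n hn => coeff_X_mul_vanish _ hn) m]

lemma csum_eq_zero_iff {m : ℕ →₀ ℕ} : csum m = 0 ↔ m = 0 := by
  constructor
  · intro h
    by_contra hm
    obtain ⟨i, hi⟩ := Finsupp.support_nonempty_iff.mpr hm
    have h1 : m i ≤ csum m := Finset.single_le_sum (fun _ _ => Nat.zero_le _) hi
    have h2 : m i ≠ 0 := Finsupp.mem_support_iff.mp hi
    omega
  · rintro rfl
    rfl

lemma csum_sub {m e : ℕ →₀ ℕ} (h : e ≤ m) : csum (m - e) + csum e = csum m := by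
  rw [← csum_add, tsub_add_cancel_of_le h]

lemma agree_pow {A B : MvPowerSeries ℕ ℚ} {D : ℕ}
    (h : ∀ μ, csum μ ≤ D → coeff μ A = coeff μ B) (k : ℕ) :
    ∀ μ, csum μ ≤ D → coeff μ (A ^ k) = coeff μ (B ^ k) := by
  induction k with
  | zero => intro μ hμ; rfl
  | succ k ih =>
      intro μ hμ
      rw [pow_succ, pow_succ, coeff_mul, coeff_mul]
      refine Finset.sum_congr rfl fun p hp => ?_
      have hpm : p.1 + p.2 = μ := Finset.HasAntidiagonal.mem_antidiagonal.mp hp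
      have hcs : csum p.1 + csum p.2 = csum μ := by rw [← csum_add, hpm]
      rw [ih p.1 (by omega), h p.2 (by omega)]

lemma fix_unique {A B : MvPowerSeries ℕ ℚ}
    (hA : A = 1 + ∑' n : ℕ, (X (n + 1) : MvPowerSeries ℕ ℚ) * A ^ (n + 1))
    (hB : B = 1 + ∑' n : ℕ, (X (n + 1) : MvPowerSeries ℕ ℚ) * B ^ (n + 1)) : A = B := by
  have key : ∀ D : ℕ, ∀ m : ℕ →₀ ℕ, csum m ≤ D → coeff m A = coeff m B := by
    intro D
    induction D with
    | zero =>
        intro m hm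
        have hm0 : m = 0 := csum_eq_zero_iff.mp (Nat.le_zero.mp hm)
        subst hm0
        have hT : Tm 0 = ∅ := by simp [Tm]
        rw [coeff_fix hA, coeff_fix hB, hT]
        simp
    | succ D ih =>
        intro m hm
        rw [coeff_fix hA, coeff_fix hB]
        congr 1
        refine Finset.sum_congr rfl fun n _ => ?_
        rw [coeff_X_mul', coeff_X_mul']
        split
        · rename_i hle
          have he : csum (Finsupp.single (n+1) 1) = 1 := csum_single _ _
          have := csum_sub hle
          exact agree_pow ih (n+1) _ (by omega)
        · rfl
  exact MvPowerSeries.ext fun m => key (csum m) m le_rfl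

/-! ### the counting power series -/

noncomputable def ser (Q : List ℤ → Prop) : MvPowerSeries ℕ ℚ :=
  fun m => if m 0 = 0 then ((cset Q m).ncard : ℚ) else 0

lemma coeff_ser (Q : List ℤ → Prop) (m : ℕ →₀ ℕ) :
    coeff m (ser Q) = if m 0 = 0 then ((cset Q m).ncard : ℚ) else 0 := rfl

lemma ser_mul_ser {Q1 Q2 Q3 : List ℤ → Prop}
    (hcard : ∀ m, m 0 = 0 → (cset Q3 m).ncard
      = ∑ p ∈ Finset.HasAntidiagonal.antidiagonal m, (cset Q1 p.1).ncard * (cset Q2 p.2).ncard) :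
    ser Q3 = ser Q1 * ser Q2 := by
  apply MvPowerSeries.ext
  intro m
  rw [coeff_ser, coeff_mul]
  by_cases h0 : m 0 = 0
  · rw [if_pos h0, hcard m h0, Nat.cast_sum]
    refine Finset.sum_congr rfl fun p hp => ?_
    have hpm : p.1 + p.2 = m := Finset.HasAntidiagonal.mem_antidiagonal.mp hp
    have h1 : p.1 0 = 0 ∧ p.2 0 = 0 := by
      have : p.1 0 + p.2 0 = m 0 := by rw [← hpm]; rfl
      omega
    rw [coeff_ser, coeff_ser, if_pos h1.1, if_pos h1.2]
    push_cast
    ring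
  · rw [if_neg h0]
    symm
    refine Finset.sum_eq_zero fun p hp => ?_
    have hpm : p.1 + p.2 = m := Finset.HasAntidiagonal.mem_antidiagonal.mp hp
    have h1 : p.1 0 ≠ 0 ∨ p.2 0 ≠ 0 := by
      have : p.1 0 + p.2 0 = m 0 := by rw [← hpm]; rfl
      omega
    rcases h1 with h1 | h1
    · rw [coeff_ser, if_neg h1, zero_mul]
    · rw [coeff_ser (Q := Q2), if_neg h1, mul_zero]

lemma ser_D_pow (n : ℕ) : ser (DPath n) = ser (DPath 0) ^ (n + 1) := by
  induction n with
  | zero => rw [pow_one]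
  | succ n ih =>
      rw [pow_succ, ← ih, mul_comm]
      exact ser_mul_ser (fun m _ => cardD n m)

lemma supp_pos {m : ℕ →₀ ℕ} (hm0 : m 0 = 0) {i : ℕ} (hi : i ∈ m.support) : 1 ≤ i := by
  rcases Nat.eq_zero_or_pos i with rfl | h
  · exact absurd hm0 (Finsupp.mem_support_iff.mp hi)
  · exact h

lemma sub_single_zero {m : ℕ →₀ ℕ} {i : ℕ} (hi : 1 ≤ i) :
    (m - Finsupp.single i 1 : ℕ →₀ ℕ) 0 = m 0 := by
  rw [Finsupp.tsub_apply, Finsupp.single_apply, if_neg (by omega)]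
  rfl

lemma ser_fix : ser (DPath 0)
    = 1 + ∑' n : ℕ, (X (n + 1) : MvPowerSeries ℕ ℚ) * (ser (DPath 0)) ^ (n + 1) := by
  classical
  apply MvPowerSeries.ext
  intro m
  rw [map_add, coeff_one,
    coeff_tsum (fun n => (X (n + 1) : MvPowerSeries ℕ ℚ) * (ser (DPath 0)) ^ (n + 1)) Tm
      (fun m n hn => coeff_X_mul_vanish _ hn) m, coeff_ser]
  have hterm : ∀ n, coeff m ((X (n + 1) : MvPowerSeries ℕ ℚ) * (ser (DPath 0)) ^ (n+1))
      = if Finsupp.single (n+1) 1 ≤ m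
          then coeff (m - Finsupp.single (n+1) 1) (ser (DPath n)) else 0 := by
    intro n
    rw [coeff_X_mul', ser_D_pow n]
  by_cases h0 : m 0 = 0
  · have hsum : ∑ n ∈ Tm m,
        coeff m ((X (n + 1) : MvPowerSeries ℕ ℚ) * (ser (DPath 0)) ^ (n+1))
        = ∑ i ∈ m.support, ((cset (DPath (i-1)) (m - Finsupp.single i 1)).ncard : ℚ) := by
      rw [Finset.sum_congr rfl (fun n _ => hterm n), Tm,
        Finset.sum_image (fun i hi j hj hij => by
            have h1 := supp_pos h0 hi
            have h2 := supp_pos h0 hj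
            omega)]
      refine Finset.sum_congr rfl fun i hi => ?_
      have hi1 : 1 ≤ i := supp_pos h0 hi
      have hi2 : i - 1 + 1 = i := by omega
      rw [hi2, if_pos (by
        rw [Finsupp.single_le_iff]
        have := Finsupp.mem_support_iff.mp hi
        omega)]
      rw [coeff_ser, if_pos (by rw [sub_single_zero hi1]; exact h0)]
    rw [if_pos h0, ncard_cset_D0 m, cardExcCons m h0, hsum]
    push_cast
    ring
  · rw [if_neg h0, if_neg (by rintro rfl; exact h0 rfl), zero_add]
    symm
    refine Finset.sum_eq_zero fun n _ => ?_
    rw [hterm n]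
    split
    · rw [coeff_ser, if_neg (by rw [sub_single_zero (by omega)]; exact h0)]
    · rfl
/-! ### the series `S₁ = ∑ tᵢ` -/

open scoped Classical

lemma coeff_S1 (m : ℕ →₀ ℕ) :
    coeff m (∑' n : ℕ, (X (n + 1) : MvPowerSeries ℕ ℚ)) =
      if ∃ i, 1 ≤ i ∧ m = Finsupp.single i 1 then 1 else 0 := by
  classical
  rw [coeff_tsum (fun n => (X (n + 1) : MvPowerSeries ℕ ℚ)) Tm
    (fun m n hn => coeff_X_vanish hn) m]
  by_cases hex : ∃ i, 1 ≤ i ∧ m = Finsupp.single i 1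
  · obtain ⟨i, hi1, rfl⟩ := hex
    rw [if_pos ⟨i, hi1, rfl⟩]
    have hsupp : (Finsupp.single i 1 : ℕ →₀ ℕ).support = {i} :=
      Finsupp.support_single_ne_zero i one_ne_zero
    have hTm : Tm (Finsupp.single i 1) = {i - 1} := by
      rw [Tm, hsupp, Finset.image_singleton]
    rw [hTm, Finset.sum_singleton, coeff_X, if_pos]
    congr 1
    omega
  · rw [if_neg hex]
    refine Finset.sum_eq_zero fun n _ => ?_
    rw [coeff_X, if_neg]
    intro h
    exact hex ⟨n + 1, by omega, h⟩

lemma coeff_mul_S1 (A : MvPowerSeries ℕ ℚ) (m : ℕ →₀ ℕ) :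
    coeff m (A * ∑' n : ℕ, (X (n + 1) : MvPowerSeries ℕ ℚ))
      = ∑ i ∈ m.support.filter (fun i => 1 ≤ i), coeff (m - Finsupp.single i 1) A := by
  classical
  rw [coeff_mul,
    Finset.sum_congr rfl (fun p (hp : p ∈ Finset.HasAntidiagonal.antidiagonal m) => by
      rw [coeff_S1 p.2, mul_ite, mul_one, mul_zero]),
    ← Finset.sum_filter]
  have himg : (Finset.HasAntidiagonal.antidiagonal m).filter (fun p => ∃ i, 1 ≤ i ∧ p.2 = Finsupp.single i 1)
      = (m.support.filter (fun i => 1 ≤ i)).image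
          (fun i => (m - Finsupp.single i 1, Finsupp.single i 1)) := by
    ext p
    simp only [Finset.mem_filter, Finset.HasAntidiagonal.mem_antidiagonal, Finset.mem_image,
      Finsupp.mem_support_iff]
    constructor
    · rintro ⟨hpm, i, hi1, hp2⟩
      refine ⟨i, ⟨?_, hi1⟩, ?_⟩
      · have h2 := DFunLike.congr_fun hpm i
        rw [hp2] at h2
        simp [Finsupp.single_apply] at h2
        omega
      · have h1 : p.1 = m - Finsupp.single i 1 := by
          rw [← hpm, hp2, add_tsub_cancel_right]
        rw [Prod.ext_iff]
        exact ⟨h1.symm, hp2.symm⟩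
    · rintro ⟨i, ⟨hmi, hi1⟩, rfl⟩
      refine ⟨?_, i, hi1, rfl⟩
      simp only
      rw [tsub_add_cancel_of_le]
      rw [Finsupp.single_le_iff]
      omega
  rw [himg, Finset.sum_image (fun i hi j hj hij => by
    have := (Prod.ext_iff.mp hij).2
    exact (Finsupp.single_left_inj one_ne_zero).mp this)]

lemma ser_NN : ser NonnegPath = ser (DPath 0) * ser PositivePath :=
  ser_mul_ser fun m _ => cardNN m

lemma ser_sub_one : ser (DPath 0) - 1
    = ser NonnegPath * ∑' n : ℕ, (X (n + 1) : MvPowerSeries ℕ ℚ) := by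
  classical
  apply MvPowerSeries.ext
  intro m
  rw [map_sub, coeff_one, coeff_mul_S1, coeff_ser]
  by_cases h0 : m 0 = 0
  · rw [if_pos h0]
    have hfilter : m.support.filter (fun i => 1 ≤ i) = m.support :=
      Finset.filter_true_of_mem (fun i hi => supp_pos h0 hi)
    rw [hfilter,
      Finset.sum_congr rfl (fun i (hi : i ∈ m.support) => by
        rw [coeff_ser, if_pos (by rw [sub_single_zero (supp_pos h0 hi)]; exact h0)]),
      ncard_cset_D0 m, cardExcStrip m h0]
    push_cast
    ring
  · rw [if_neg h0, if_neg (by rintro rfl; exact h0 rfl), zero_sub]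
    have : ∀ i ∈ m.support.filter (fun i => 1 ≤ i),
        coeff (m - Finsupp.single i 1) (ser NonnegPath) = 0 := by
      intro i hi
      have hi1 : 1 ≤ i := (Finset.mem_filter.mp hi).2
      rw [coeff_ser, if_neg (by rw [sub_single_zero hi1]; exact h0)]
    rw [Finset.sum_eq_zero this, neg_zero]

lemma S1_ne_zero : (∑' n : ℕ, (X (n + 1) : MvPowerSeries ℕ ℚ)) ≠ 0 := by
  intro h
  have h1 := coeff_S1 (Finsupp.single 1 1)
  rw [h, map_zero, if_pos ⟨1, le_rfl, rfl⟩] at h1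
  exact one_ne_zero h1.symm

/-- (Theorem 5: `H` counts positive paths.) For every finitely supported exponent
function `m` (supported on the variables `t_i`, `i ≥ 1`), the set of positive paths
with up-step content `m` (and any number of down steps) is finite, and the coefficient of
`∏_{i ≥ 1} t_i ^ (m i)` in `H` is its cardinality. -/
theorem geode_stmt11 (S G H : MvPowerSeries ℕ ℚ)
    (hS : S = 1 + ∑' n : ℕ, (X (n + 1) : MvPowerSeries ℕ ℚ) * S ^ (n + 1))
    (hG : S - 1 = G * ∑' n : ℕ, (X (n + 1) : MvPowerSeries ℕ ℚ))
    (hH : G = S * H) :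
    ∀ m : ℕ →₀ ℕ, m 0 = 0 →
      {P : List ℤ | PositivePath P ∧ HasContent m P}.Finite ∧
        coeff m H = (Nat.card {P : List ℤ | PositivePath P ∧ HasContent m P} : ℚ) := by
  have hSc : S = ser (DPath 0) := fix_unique hS ser_fix
  have hGN : G = ser NonnegPath := by
    have h1 : (G - ser NonnegPath) * (∑' n : ℕ, (X (n + 1) : MvPowerSeries ℕ ℚ)) = 0 := by
      rw [sub_mul, ← hG, hSc, ser_sub_one, sub_self]
    rcases mul_eq_zero.mp h1 with h | h
    · exact sub_eq_zero.mp h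
    · exact absurd h S1_ne_zero
  have hSne : S ≠ 0 := by
    intro h
    have h1 := coeff_fix hS 0
    rw [h] at h1
    have hT : Tm 0 = ∅ := by simp [Tm]
    rw [hT, if_pos rfl, Finset.sum_empty, add_zero, map_zero] at h1
    exact one_ne_zero h1.symm
  have hHF : H = ser PositivePath := by
    have h1 : S * (H - ser PositivePath) = 0 := by
      rw [mul_sub, ← hH, hGN, ser_NN, hSc, sub_self]
    rcases mul_eq_zero.mp h1 with h | h
    · exact absurd h hSne
    · exact sub_eq_zero.mp h
  intro m hm0
  have hset : {P : List ℤ | PositivePath P ∧ HasContent m P} = cset PositivePath m := by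
    ext P
    simp only [Set.mem_setOf_eq, cset]
    exact and_congr_right fun _ => hasContent_iff hm0 P
  constructor
  · rw [hset]
    exact finite_cset_positive m
  · rw [hHF, coeff_ser, if_pos hm0, hset]
    rw [Nat.card_coe_set_eq]
end
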